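/- If a sharp domain is Noetherian, then it is a Dedekind domain. -/

import Mathlib

/-- A domain `R` is *sharp* if whenever `I ⊇ A*B` with `I, A, B` nonzero ideals,
there exist ideals `A' ⊇ A` and `B' ⊇ B` such that `I = A'*B'`. -/
def IsSharpDomain (R : Type*) [CommRing R] : Prop :=
  ∀ I A B : Ideal R, I ≠ ⊥ → A ≠ ⊥ → B ≠ ⊥ → A * B ≤ I →
    ∃ A' B' : Ideal R, A ≤ A' ∧ B ≤ B' ∧ I = A' * B'

open Ideal Polynomial

section Aux

variable {R : Type*} [CommRing R] [IsDomain R]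

/-- A sharp Noetherian domain has Krull dimension at most one. -/
lemma IsSharpDomain.dimensionLEOne [IsNoetherianRing R] (h : IsSharpDomain R) :
    Ring.DimensionLEOne R := by
  constructor
  intro P hbot hP
  by_contra hnm
  obtain ⟨M, hM, hPM⟩ := P.exists_le_maximal hP.ne_top
  have hPltM : P < M := lt_of_le_of_ne hPM (fun e => hnm (e ▸ hM))
  obtain ⟨b, hbM, hbP⟩ := SetLike.exists_of_lt hPltM
  set J : Ideal R := P + Ideal.span {b} with hJ
  have hPJ : P ≤ J := le_sup_left
  have hbJ : b ∈ J := Submodule.mem_sup_right (Ideal.mem_span_singleton_self b)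
  have hJne : J ≠ ⊥ := fun e => hbot (eq_bot_iff.2 (e ▸ hPJ))
  have hIne : (P + Ideal.span {b ^ 2}) ≠ ⊥ :=
    fun e => hbot (eq_bot_iff.2 (e ▸ (le_sup_left : P ≤ P + Ideal.span {b ^ 2})))
  have hmul : J * J ≤ P + Ideal.span {b ^ 2} := by
    refine Ideal.mul_le.2 fun r hr s hs => ?_
    obtain ⟨y₁, hy₁, z₁, hz₁, rfl⟩ := Submodule.mem_sup.1 hr
    obtain ⟨y₂, hy₂, z₂, hz₂, rfl⟩ := Submodule.mem_sup.1 hs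
    obtain ⟨c₁, rfl⟩ := Ideal.mem_span_singleton'.1 hz₁
    obtain ⟨c₂, rfl⟩ := Ideal.mem_span_singleton'.1 hz₂
    have heq : (y₁ + c₁ * b) * (y₂ + c₂ * b)
        = (y₁ * (y₂ + c₂ * b) + (c₁ * b) * y₂) + (c₁ * c₂) * b ^ 2 := by ring
    rw [heq]
    exact Submodule.add_mem _
      (Submodule.mem_sup_left (add_mem (Ideal.mul_mem_right _ _ hy₁)
        (Ideal.mul_mem_left _ _ hy₂)))
      (Submodule.mem_sup_right (Ideal.mem_span_singleton'.2 ⟨c₁ * c₂, rfl⟩))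
  obtain ⟨A', B', hA, hB, heq⟩ := h (P + Ideal.span {b ^ 2}) J J hIne hJne hJne hmul
  -- both factors are contained in J
  have key : ∀ X Y : Ideal R, P + Ideal.span {b ^ 2} = X * Y → b ∈ Y → X ≤ J := by
    intro X Y hXY hbY a ha
    have hab : a * b ∈ X * Y := Ideal.mul_mem_mul ha hbY
    rw [← hXY] at hab
    obtain ⟨x, hx, z, hz, hxz⟩ := Submodule.mem_sup.1 hab
    obtain ⟨s, rfl⟩ := Ideal.mem_span_singleton'.1 hz
    have hxP : (a - s * b) * b ∈ P := by
      have : (a - s * b) * b = x := by linear_combination -hxz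
      rwa [this]
    rcases hP.mem_or_mem hxP with h1 | h1
    · have : a = (a - s * b) + s * b := by ring
      rw [this]
      exact Submodule.add_mem _ (Submodule.mem_sup_left h1)
        (Submodule.mem_sup_right (Ideal.mem_span_singleton'.2 ⟨s, rfl⟩))
    · exact absurd h1 hbP
  have hA' : A' ≤ J := key A' B' heq (hB hbJ)
  have hB' : B' ≤ J := key B' A' (by rwa [mul_comm]) (hA hbJ)
  -- P ≤ J * P
  have hPJP : P ≤ J * P := by
    intro x hx
    have hxI : x ∈ A' * B' := heq ▸ (Submodule.mem_sup_left hx)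
    have hxJJ : x ∈ J * J := Ideal.mul_mono hA' hB' hxI
    rw [hJ] at hxJJ
    rw [show (P + Ideal.span {b}) * (P + Ideal.span {b})
        = (P + Ideal.span {b}) * P + (P + Ideal.span {b}) * Ideal.span {b} from mul_add _ _ _]
      at hxJJ
    obtain ⟨u, hu, v, hv, huv⟩ := Submodule.mem_sup.1 hxJJ
    obtain ⟨w, hw, rfl⟩ := Ideal.mem_mul_span_singleton.1 hv
    have hwb : w * b ∈ P := by
      have huP : u ∈ P := Ideal.mul_le_right hu
      have : w * b = x - u := by linear_combination huv
      rw [this]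
      exact Submodule.sub_mem _ hx huP
    rcases hP.mem_or_mem hwb with h1 | h1
    · rw [← huv]
      exact Submodule.add_mem _ hu
        (by rw [mul_comm w b]; exact Ideal.mul_mem_mul hbJ h1)
    · exact absurd h1 hbP
  -- Nakayama
  have hfg : P.FG := IsNoetherian.noetherian P
  obtain ⟨r, hr1, hr2⟩ :=
    Submodule.exists_sub_one_mem_and_smul_eq_zero_of_fg_of_le_smul J P hfg
      (by rwa [smul_eq_mul])
  obtain ⟨x₀, hx₀P, hx₀⟩ := Submodule.exists_mem_ne_zero_of_ne_bot hbot
  have hr0 : r = 0 := by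
    have := hr2 x₀ hx₀P
    rw [smul_eq_mul] at this
    rcases mul_eq_zero.1 this with h1 | h1
    · exact h1
    · exact absurd h1 hx₀
  have h1J : (1 : R) ∈ J := by
    have : -(1 : R) ∈ J := by simpa [hr0] using hr1
    simpa using J.neg_mem this
  have hJM : J ≤ M := sup_le hPM (Ideal.span_le.2 (by simpa using hbM))
  exact hM.ne_top (Ideal.eq_top_iff_one M |>.2 (hJM h1J))

/-- Key divisibility lemma: in a sharp domain, if `p/q` satisfies a monic polynomial whose
coefficients have the right divisibility by powers of `q`, then `q ∣ p`. -/
lemma IsSharpDomain.dvd_of_monic (h : IsSharpDomain R) {p q : R} (hq : q ≠ 0)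
    (g : R[X]) (hg : g.Monic) (hev : g.eval p = 0)
    (hco : ∀ i < g.natDegree, q ^ (g.natDegree - i) ∣ g.coeff i) : q ∣ p := by
  set n := g.natDegree with hn
  have hn1 : 1 ≤ n := by
    rcases Nat.eq_zero_or_pos n with h0 | h0
    · exfalso
      have : g = 1 := hg.natDegree_eq_zero.1 h0
      rw [this] at hev
      simp at hev
    · exact h0
  -- the fundamental relation  p ^ n = - ∑ coeff i * p ^ i
  have hpn : p ^ n = -∑ i ∈ Finset.range n, g.coeff i * p ^ i := by
    have := hev
    rw [Polynomial.eval_eq_sum_range, Finset.sum_range_succ, ← hn, hg.coeff_natDegree,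
      one_mul] at this
    exact eq_neg_of_add_eq_zero_right this
  -- membership family
  set A : Ideal R := (Ideal.span {p, q}) ^ n with hA
  set Qn : Ideal R := Ideal.span {q ^ n} with hQn
  set C : Ideal R := Submodule.colon Qn A with hC
  have hpI : p ∈ Ideal.span {p, q} := Ideal.subset_span (Set.mem_insert p {q})
  have hqI : q ∈ Ideal.span {p, q} := Ideal.subset_span (Set.mem_insert_of_mem _ rfl)
  -- propagation of the divisibility family
  have prop : ∀ y : R, (∀ i ≤ n, q ^ i ∣ y * p ^ i) → ∀ j, q ^ j ∣ y * p ^ j := by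
    intro y hy j
    induction j using Nat.strong_induction_on with
    | _ j ih =>
      rcases le_or_gt j n with hj | hj
      · exact hy j hj
      · have hsplit : y * p ^ j = (y * p ^ (j - n)) * p ^ n := by
          rw [mul_assoc, ← pow_add, Nat.sub_add_cancel hj.le]
        rw [hsplit, hpn, mul_neg, Finset.mul_sum]
        refine dvd_neg.2 (Finset.dvd_sum fun i hi => ?_)
        have hi' : i < n := Finset.mem_range.1 hi
        obtain ⟨c, hc⟩ := hco i hi'
        obtain ⟨d, hd⟩ := ih (j - n + i) (by omega)
        have hterm : (y * p ^ (j - n)) * (g.coeff i * p ^ i)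
            = g.coeff i * (y * p ^ (j - n + i)) := by rw [pow_add]; ring
        have hpow : q ^ j = q ^ (n - i) * q ^ (j - n + i) := by
          rw [← pow_add]; congr 1; omega
        rw [hterm, hc, hd, hpow]
        exact mul_dvd_mul (dvd_mul_right _ c) (dvd_mul_right _ d)
  -- characterization of membership in C, forward direction
  have hCdvd : ∀ y ∈ C, ∀ i ≤ n, q ^ i ∣ y * p ^ i := by
    intro y hyC i hi
    have hmono : p ^ i * q ^ (n - i) ∈ A := by
      have h1 := Ideal.mul_mem_mul (Ideal.pow_mem_pow hpI i) (Ideal.pow_mem_pow hqI (n - i))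
      rwa [← pow_add, Nat.add_sub_cancel' hi] at h1
    have h2 := Submodule.mem_colon.1 hyC _ hmono
    rw [smul_eq_mul] at h2
    obtain ⟨d, hd⟩ := Ideal.mem_span_singleton.1 h2
    refine ⟨d, ?_⟩
    have hcancel : (y * p ^ i) * q ^ (n - i) = (q ^ i * d) * q ^ (n - i) := by
      calc (y * p ^ i) * q ^ (n - i) = y * (p ^ i * q ^ (n - i)) := by ring
        _ = q ^ n * d := hd
        _ = (q ^ i * d) * q ^ (n - i) := by
            have hpow : q ^ n = q ^ i * q ^ (n - i) := by
              rw [← pow_add]; congr 1; omega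
            rw [hpow]; ring
    exact mul_right_cancel₀ (pow_ne_zero _ hq) hcancel
  -- backward direction
  have hmemC : ∀ y : R, (∀ j, q ^ j ∣ y * p ^ j) → y ∈ C := by
    intro y hy
    have key : ∀ m : ℕ, ∀ a ∈ (Ideal.span {p, q}) ^ m, ∀ k : ℕ, q ^ (m + k) ∣ y * (p ^ k * a) := by
      intro m
      induction m with
      | zero =>
        intro a _ k
        rw [zero_add, ← mul_assoc]
        exact (hy k).mul_right a
      | succ m ihm =>
        intro a ha
        rw [pow_succ] at ha
        refine Submodule.mul_induction_on ha ?_ ?_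
        · intro x hx z hz k
          obtain ⟨c, d, hcd⟩ := Ideal.mem_span_pair.1 hz
          have h1 : q ^ (m + 1 + k) ∣ c * (y * (p ^ (k + 1) * x)) := by
            have := (ihm x hx (k + 1)).mul_left c
            rwa [show m + (k + 1) = m + 1 + k by omega] at this
          have h2 : q ^ (m + 1 + k) ∣ (d * q) * (y * (p ^ k * x)) := by
            obtain ⟨e, he⟩ := ihm x hx k
            refine ⟨d * e, ?_⟩
            rw [show m + 1 + k = (m + k) + 1 by omega, pow_succ, he]; ring
          have hsp : y * (p ^ k * (x * z))
              = c * (y * (p ^ (k + 1) * x)) + (d * q) * (y * (p ^ k * x)) := by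
            rw [← hcd]; ring
          rw [hsp]
          exact dvd_add h1 h2
        · intro x₁ x₂ hx₁ hx₂ k
          have := dvd_add (hx₁ k) (hx₂ k)
          rwa [← mul_add, ← mul_add] at this
    refine Submodule.mem_colon.2 fun a ha => ?_
    rw [smul_eq_mul]
    refine Ideal.mem_span_singleton.2 ?_
    have := key n a ha 0
    simpa using this
  -- apply sharpness
  have hQnbot : Qn ≠ ⊥ := by
    simp only [hQn, ne_eq, Ideal.span_singleton_eq_bot]
    exact pow_ne_zero _ hq
  have hAbot : A ≠ ⊥ := by
    intro e
    have : q ^ n ∈ A := Ideal.pow_mem_pow hqI n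
    rw [e] at this
    exact pow_ne_zero n hq ((Submodule.mem_bot R).1 this)
  have hqnC : (q ^ n : R) ∈ C := by
    refine Submodule.mem_colon.2 fun a ha => ?_
    rw [smul_eq_mul]
    exact Ideal.mem_span_singleton.2 (dvd_mul_right _ _)
  have hCbot : C ≠ ⊥ := by
    intro e
    rw [e] at hqnC
    exact pow_ne_zero n hq ((Submodule.mem_bot R).1 hqnC)
  have hACQn : A * C ≤ Qn := by
    refine Ideal.mul_le.2 fun a ha c hc => ?_
    have := Submodule.mem_colon.1 hc a ha
    rwa [smul_eq_mul, mul_comm] at this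
  obtain ⟨A', B', hAA', hCB', heq⟩ := h Qn A C hQnbot hAbot hCbot hACQn
  have hB'C : B' = C := by
    refine le_antisymm ?_ hCB'
    intro x hx
    refine Submodule.mem_colon.2 fun a ha => ?_
    rw [smul_eq_mul, mul_comm]
    rw [heq]
    exact Ideal.mul_mem_mul (hAA' ha) hx
  rw [hB'C] at heq
  -- p * C ≤ q * C
  have hpC : Ideal.span {p} * C ≤ Ideal.span {q} * C := by
    refine Ideal.mul_le.2 fun r hr c hc => ?_
    obtain ⟨t, rfl⟩ := Ideal.mem_span_singleton'.1 hr
    have hfam : ∀ j, q ^ j ∣ c * p ^ j := prop c (hCdvd c hc)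
    have h1 : q ∣ c * p := by simpa using hfam 1
    obtain ⟨z, hz⟩ := h1
    have hzC : z ∈ C := by
      refine hmemC z fun j => ?_
      have h2 : q ^ (j + 1) ∣ q * (z * p ^ j) := by
        have h3 := hfam (j + 1)
        have : c * p ^ (j + 1) = q * (z * p ^ j) := by
          rw [pow_succ]
          calc c * (p ^ j * p) = (c * p) * p ^ j := by ring
            _ = (q * z) * p ^ j := by rw [hz]
            _ = q * (z * p ^ j) := by ring
        rwa [this] at h3
      have h4 : q * q ^ j ∣ q * (z * p ^ j) := by
        rwa [show j + 1 = 1 + j by omega, pow_add, pow_one] at h2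
      exact (mul_dvd_mul_iff_left hq).1 h4
    rw [mul_comm (t * p) c]
    refine Ideal.mem_span_singleton_mul.2 ⟨t * z, Ideal.mul_mem_left _ _ hzC, ?_⟩
    linear_combination (-t) * hz
  -- conclude
  have hle : Ideal.span {p} * Qn ≤ Ideal.span {q} * Qn := by
    rw [heq]
    calc Ideal.span {p} * (A' * C) = A' * (Ideal.span {p} * C) := by ring
      _ ≤ A' * (Ideal.span {q} * C) := Ideal.mul_mono_right hpC
      _ = Ideal.span {q} * (A' * C) := by ring
  have hmem : p * q ^ n ∈ Ideal.span {q} * Qn := by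
    refine hle ?_
    exact Ideal.mul_mem_mul (Ideal.mem_span_singleton_self p)
      (Ideal.mem_span_singleton_self (q ^ n))
  rw [hQn, Ideal.span_singleton_mul_span_singleton] at hmem
  obtain ⟨d, hd⟩ := Ideal.mem_span_singleton.1 hmem
  refine ⟨d, ?_⟩
  have : p * q ^ n = (q * d) * q ^ n := by
    rw [hd]; ring
  exact mul_right_cancel₀ (pow_ne_zero _ hq) this

end Aux

theorem sharp_noetherian_dedekind (R : Type*) [CommRing R] [IsDomain R]
    [IsNoetherianRing R] (h : IsSharpDomain R) : IsDedekindDomain R := by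
  have hdim := h.dimensionLEOne
  refine (isDedekindDomain_iff R (FractionRing R)).mpr
    ⟨inferInstance, inferInstance, hdim, ?_⟩
  intro x hx
  obtain ⟨p, q, hq, rfl⟩ := IsFractionRing.div_surjective (A := R) x
  obtain ⟨g, hmonic, hev⟩ := hx
  have hinj : Function.Injective (algebraMap R (FractionRing R)) :=
    IsFractionRing.injective R (FractionRing R)
  have hq0 : q ≠ 0 := nonZeroDivisors.ne_zero hq
  have h0 : Polynomial.eval₂ (algebraMap R (FractionRing R)) (algebraMap R (FractionRing R) p)
      (g.scaleRoots q) = 0 :=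
    Polynomial.scaleRoots_eval₂_eq_zero_of_eval₂_div_eq_zero hinj hev hq
  rw [Polynomial.eval₂_at_apply] at h0
  have hev' : (g.scaleRoots q).eval p = 0 := hinj (by simpa using h0)
  have hmonic' : (g.scaleRoots q).Monic := (Polynomial.monic_scaleRoots_iff q).2 hmonic
  have hco : ∀ i < (g.scaleRoots q).natDegree,
      q ^ ((g.scaleRoots q).natDegree - i) ∣ (g.scaleRoots q).coeff i := by
    intro i _
    rw [Polynomial.coeff_scaleRoots, Polynomial.natDegree_scaleRoots]
    exact Dvd.intro_left _ rfl
  obtain ⟨r, hr⟩ := h.dvd_of_monic hq0 (g.scaleRoots q) hmonic' hev' hco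
  refine ⟨r, ?_⟩
  rw [hr, _root_.map_mul, mul_comm]
  rw [mul_div_assoc, div_self (fun h0 => hq0 (hinj (by simpa using h0))), mul_one]
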